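/- Let A be a unital C*-algebra and let T : M_n(ℂ) → A be a unital completely positive map. Then there exists a partial isometry t in the C*-algebra M_n(M_n(A)) of n×n matrices over n×n matrices over A such that: t*·t is the matrix whose ((1,1),(1,1)) entry is 1_A and all other entries are 0; and for every b ∈ M_n(ℂ), t*·(b⊗1⊗1)·t is the matrix whose ((1,1),(1,1)) entry is T(b) and all other entries are 0. Here b⊗1⊗1 denotes the element of M_n(M_n(A)) whose entry at position ((i,k),(j,l)) is b_{ij}·δ_{kl}·1_A. -/

import Mathlib

/-- A square matrix over a ∗-ring is positive if it is of the form `Yᴴ·Y`.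
(In a C*-algebra this is the usual notion of positivity.) -/
def MatPos {R : Type*} [NonUnitalSemiring R] [StarRing R] {k : ℕ}
    (X : Matrix (Fin k) (Fin k) R) : Prop :=
  ∃ Y : Matrix (Fin k) (Fin k) R, X = star Y * Y

/-- A linear map between C*-algebras is completely positive if all of its entrywise
amplifications to matrix algebras map positive matrices to positive matrices. -/
def IsCP {A B : Type*} [NonUnitalSemiring A] [StarRing A] [Module ℂ A]
    [NonUnitalSemiring B] [StarRing B] [Module ℂ B] (T : A →ₗ[ℂ] B) : Prop :=
  ∀ (k : ℕ) (X : Matrix (Fin k) (Fin k) A), MatPos X → MatPos (X.map fun x => T x)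

/-- Let `A` be a unital C*-algebra and `T : M_n(ℂ) → A` unital completely
positive.  Then there is a partial isometry `t ∈ M_n(M_n(A))` with
`t*·t = e_{(1,1),(1,1)} ⊗ 1` and `t*·(b ⊗ 1 ⊗ 1)·t = e_{(1,1),(1,1)} ⊗ T(b)` for all
`b ∈ M_n(ℂ)`. -/
theorem stmt_8 {A : Type*} [NormedRing A] [StarRing A] [CStarRing A] [CompleteSpace A]
    [NormedAlgebra ℂ A] [StarModule ℂ A]
    (n : ℕ) (hn : 0 < n)
    (T : Matrix (Fin n) (Fin n) ℂ →ₗ[ℂ] A) (hT1 : T 1 = 1) (hTcp : IsCP T) :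
    ∃ t : Matrix (Fin n × Fin n) (Fin n × Fin n) A,
      star t * t
        = Matrix.single ((⟨0, hn⟩ : Fin n), (⟨0, hn⟩ : Fin n))
            ((⟨0, hn⟩ : Fin n), (⟨0, hn⟩ : Fin n)) (1 : A) ∧
      ∀ b : Matrix (Fin n) (Fin n) ℂ,
        star t * (Matrix.of fun p q : Fin n × Fin n =>
            if p.2 = q.2 then b p.1 q.1 • (1 : A) else 0) * t
          = Matrix.single ((⟨0, hn⟩ : Fin n), (⟨0, hn⟩ : Fin n))
              ((⟨0, hn⟩ : Fin n), (⟨0, hn⟩ : Fin n)) (T b) := by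
  classical
  set z : Fin n := ⟨0, hn⟩ with hz
  -- star of a standard basis matrix
  have hstar : ∀ i j : Fin n, star (Matrix.single i j (1:ℂ))
      = Matrix.single j i (1:ℂ) := by
    intro i j
    ext a b
    simp [Matrix.single, Matrix.conjTranspose_apply, and_comm]
  -- the Choi matrix is positive
  obtain ⟨Y, hY⟩ := hTcp n (Matrix.of fun i j => Matrix.single i j (1:ℂ))
    ⟨Matrix.of fun k j => if k = z then Matrix.single z j 1 else 0, by
      ext i j : 2
      rw [Matrix.mul_apply]
      rw [Finset.sum_eq_single z]
      · simp [Matrix.conjTranspose_apply, hstar, Matrix.single_mul_single_same]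
      · intro k _ hk
        simp [Matrix.conjTranspose_apply, hk]
      · simp⟩
  have hChoi : ∀ i j : Fin n, T (Matrix.single i j 1)
      = ∑ k, star (Y k i) * Y k j := by
    intro i j
    have := congrFun (congrFun hY i) j
    simpa [Matrix.mul_apply, Matrix.conjTranspose_apply] using this
  -- sum of diagonal basis matrices is 1
  have hone : (1 : Matrix (Fin n) (Fin n) ℂ) = ∑ i, Matrix.single i i 1 := by
    ext a c
    rw [Matrix.sum_apply, Finset.sum_eq_single a]
    · simp [Matrix.single, Matrix.one_apply]
    · intro k _ hk
      exact Matrix.single_apply_of_row_ne hk _ _ _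
    · simp
  refine ⟨Matrix.of fun p q : Fin n × Fin n => if q = (z, z) then Y p.2 p.1 else 0, ?_, ?_⟩
  · ext q q'
    rw [Matrix.mul_apply]
    by_cases h1 : q = (z, z)
    · by_cases h2 : q' = (z, z)
      · subst h1; subst h2
        simp only [Matrix.conjTranspose_apply, Matrix.of_apply, if_pos rfl, star_star]
        rw [Fintype.sum_prod_type, Matrix.single_apply_same]
        rw [Finset.sum_comm]
        calc ∑ k : Fin n, ∑ i : Fin n, star (Y k i) * Y k i
            = ∑ i : Fin n, ∑ k : Fin n, star (Y k i) * Y k i := Finset.sum_comm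
          _ = ∑ i : Fin n, T (Matrix.single i i 1) := by
              simp [hChoi]
          _ = T (∑ i, Matrix.single i i 1) := by rw [map_sum]
          _ = 1 := by rw [← hone, hT1]
      · simp [Matrix.conjTranspose_apply, h2, Ne.symm h2]
    · simp [Matrix.conjTranspose_apply, h1, Ne.symm h1]
  · intro b
    have hTb : T b = ∑ i, ∑ j, b i j • T (Matrix.single i j 1) := by
      conv_lhs => rw [Matrix.matrix_eq_sum_single b]
      rw [map_sum]
      refine Finset.sum_congr rfl fun i _ => ?_
      rw [map_sum]
      refine Finset.sum_congr rfl fun j _ => ?_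
      rw [← map_smul]
      congr 1
      rw [Matrix.smul_single, smul_eq_mul, mul_one]
    ext q q'
    by_cases h1 : q = (z, z)
    · by_cases h2 : q' = (z, z)
      · subst h1; subst h2
        rw [Matrix.single_apply_same]
        simp only [Matrix.mul_apply, Matrix.star_apply, Matrix.of_apply,
          eq_self_iff_true, if_true, star_star, Finset.sum_mul]
        simp only [mul_ite, mul_zero, ite_mul, zero_mul]
        simp only [Fintype.sum_prod_type]
        simp only [Finset.sum_ite_eq', Finset.mem_univ, if_true]
        simp only [mul_smul_comm, smul_mul_assoc, mul_one]
        rw [hTb]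
        simp only [hChoi, Finset.smul_sum]
        calc ∑ j, ∑ l, ∑ i, b i j • (star (Y l i) * Y l j)
            = ∑ j, ∑ i, ∑ l, b i j • (star (Y l i) * Y l j) :=
              Finset.sum_congr rfl fun j _ => Finset.sum_comm
          _ = ∑ i, ∑ j, ∑ l, b i j • (star (Y l i) * Y l j) := Finset.sum_comm
      · simp [Matrix.mul_apply, Matrix.star_apply, h2, Ne.symm h2]
    · simp [Matrix.mul_apply, Matrix.star_apply, h1, Ne.symm h1]
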